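/- For finite information structures u, v on K × C × D: sup over zero-sum payoff functions g of (val(v,g) − val(u,g)) equals inf over pairs (u', v') of finite information structures with u' ⪯ u and v' ⪰ v of ‖u' − v'‖₁, where ⪯ is the comparison 'player 1 weakly prefers in every zero-sum game' (equivalently, existence of garblings as in the Blackwell-type characterization). -/
import Mathlib


open scoped BigOperators

noncomputable section

/-- A probability distribution on a finite type, given as a nonnegative function summing to 1. -/
def IsDist {α : Type*} [Fintype α] (u : α → ℝ) : Prop :=
  (∀ a, 0 ≤ u a) ∧ ∑ a, u a = 1

/-- A garbling (stochastic map / behavioral strategy). -/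
def IsKernel {α β : Type*} [Fintype β] (q : α → β → ℝ) : Prop :=
  ∀ a, IsDist (q a)

/-- Expected payoff in the zero-sum Bayesian game `Γ(u,g)` when players use
behavioral strategies `σ` and `τ`. -/
def pay {K C D I J : Type*} [Fintype K] [Fintype C] [Fintype D] [Fintype I] [Fintype J]
    (u : K × C × D → ℝ) (g : K → I → J → ℝ) (σ : C → I → ℝ) (τ : D → J → ℝ) : ℝ :=
  ∑ k, ∑ c, ∑ d, ∑ i, ∑ j, u (k, c, d) * σ c i * τ d j * g k i j

/-- The value (maxmin) of the zero-sum Bayesian game `Γ(u,g)`, player 1 maximizing. -/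
def gameVal {K C D I J : Type*} [Fintype K] [Fintype C] [Fintype D] [Fintype I] [Fintype J]
    (u : K × C × D → ℝ) (g : K → I → J → ℝ) : ℝ :=
  sSup {x : ℝ | ∃ σ : C → I → ℝ, IsKernel σ ∧
    x = sInf {y : ℝ | ∃ τ : D → J → ℝ, IsKernel τ ∧ y = pay u g σ τ}}

/-- Garbling of player 1's signal: `(q.u)(k,c,d) = ∑ c', u(k,c',d) q(c|c')`. -/
def garbleL {K C C' D : Type*} [Fintype C] (q : C → C' → ℝ) (u : K × C × D → ℝ) :
    K × C' × D → ℝ :=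
  fun x => ∑ c, u (x.1, c, x.2.2) * q c x.2.1

/-- Garbling of player 2's signal: `(u.q)(k,c,d) = ∑ d', u(k,c,d') q(d|d')`. -/
def garbleR {K C D D' : Type*} [Fintype D] (q : D → D' → ℝ) (u : K × C × D → ℝ) :
    K × C × D' → ℝ :=
  fun x => ∑ d, u (x.1, x.2.1, d) * q d x.2.2

/-- ℓ¹ distance. -/
def l1 {α : Type*} [Fintype α] (u v : α → ℝ) : ℝ := ∑ a, |u a - v a|

/-- Payoff functions bounded by 1. -/
def Bounded1 {K I J : Type*} (g : K → I → J → ℝ) : Prop := ∀ k i j, |g k i j| ≤ 1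

/-- The value-based distance: sup over all finite zero-sum games (with nonempty
finite action sets, payoffs bounded by 1) of the absolute difference of values. -/
def valueDist {K C D C' D' : Type*} [Fintype K] [Fintype C] [Fintype D] [Fintype C'] [Fintype D']
    (u : K × C × D → ℝ) (v : K × C' × D' → ℝ) : ℝ :=
  sSup {x : ℝ | ∃ (m n : ℕ) (g : K → Fin (m + 1) → Fin (n + 1) → ℝ),
    Bounded1 g ∧ x = |gameVal u g - gameVal v g|}

/-- Value of a single-agent decision problem on a single-agent information structure. -/
def val1 {K C I : Type*} [Fintype K] [Fintype C] [Fintype I] [Nonempty I]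
    (u : K × C → ℝ) (g : K → I → ℝ) : ℝ :=
  ∑ c, ⨆ i, ∑ k, u (k, c) * g k i

/-- The single-agent value-based distance. -/
def valueDist1 {K C C' : Type*} [Fintype K] [Fintype C] [Fintype C']
    (u : K × C → ℝ) (v : K × C' → ℝ) : ℝ :=
  sSup {x : ℝ | ∃ (m : ℕ) (g : K → Fin (m + 1) → ℝ),
    (∀ k i, |g k i| ≤ 1) ∧ x = |val1 u g - val1 v g|}

/-- Garbling of the signal in a single-agent structure. -/
def garble1 {K C C' : Type*} [Fintype C] (q : C → C' → ℝ) (u : K × C → ℝ) : K × C' → ℝ :=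
  fun x => ∑ c, u (x.1, c) * q c x.2

end

/-- `Pref u w` : player 1 weakly prefers `u` to `w` in every finite zero-sum game. -/
def Pref {K C D : Type*} [Fintype K] [Fintype C] [Fintype D]
    (u w : K × C × D → ℝ) : Prop :=
  ∀ (m n : ℕ) (g : K → Fin (m + 1) → Fin (n + 1) → ℝ), Bounded1 g →
    gameVal w g ≤ gameVal u g

section Aux

open Finset

set_option linter.unusedSectionVars false
set_option maxHeartbeats 1000000
open scoped Classical

variable {K C D : Type*} [Fintype K] [Fintype C] [Fintype D]
variable {I J : Type*} [Fintype I] [Fintype J]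

/-- The uniform kernel. -/
noncomputable def unifK (α β : Type*) [Fintype β] [Nonempty β] : α → β → ℝ :=
  fun _ _ => (Fintype.card β : ℝ)⁻¹

lemma isKernel_unifK (α β : Type*) [Fintype β] [Nonempty β] : IsKernel (unifK α β) := by
  intro a
  refine ⟨fun b => by unfold unifK; positivity, ?_⟩
  unfold unifK
  rw [Finset.sum_const, Finset.card_univ, nsmul_eq_mul, mul_inv_cancel₀]
  exact_mod_cast Fintype.card_ne_zero

lemma inner2_abs_le {σ : C → I → ℝ} {τ : D → J → ℝ} {g : K → I → J → ℝ}
    (hσ : IsKernel σ) (hτ : IsKernel τ) (hg : Bounded1 g) (k : K) (c : C) (d : D) :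
    |∑ i, ∑ j, σ c i * τ d j * g k i j| ≤ 1 := by
  calc |∑ i, ∑ j, σ c i * τ d j * g k i j| ≤ ∑ i, |∑ j, σ c i * τ d j * g k i j| :=
        Finset.abs_sum_le_sum_abs _ _
    _ ≤ ∑ i, ∑ j, |σ c i * τ d j * g k i j| := by
        refine Finset.sum_le_sum fun i _ => Finset.abs_sum_le_sum_abs _ _
    _ ≤ ∑ i, ∑ j, σ c i * τ d j := by
        refine Finset.sum_le_sum fun i _ => Finset.sum_le_sum fun j _ => ?_
        rw [abs_mul, abs_mul, abs_of_nonneg ((hσ c).1 i), abs_of_nonneg ((hτ d).1 j)]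
        calc σ c i * τ d j * |g k i j| ≤ σ c i * τ d j * 1 := by
              apply mul_le_mul_of_nonneg_left (hg k i j)
              exact mul_nonneg ((hσ c).1 i) ((hτ d).1 j)
          _ = σ c i * τ d j := mul_one _
    _ = (∑ i, σ c i) * (∑ j, τ d j) := by rw [Finset.sum_mul_sum]
    _ = 1 := by rw [(hσ c).2, (hτ d).2, mul_one]

lemma pay_eq (u : K × C × D → ℝ) (g : K → I → J → ℝ) (σ : C → I → ℝ) (τ : D → J → ℝ) :
    pay u g σ τ = ∑ k, ∑ c, ∑ d, u (k, c, d) * (∑ i, ∑ j, σ c i * τ d j * g k i j) := by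
  unfold pay
  refine Finset.sum_congr rfl fun k _ => Finset.sum_congr rfl fun c _ =>
    Finset.sum_congr rfl fun d _ => ?_
  rw [Finset.mul_sum]
  refine Finset.sum_congr rfl fun i _ => ?_
  rw [Finset.mul_sum]
  refine Finset.sum_congr rfl fun j _ => by ring

lemma sum_triple (w : K × C × D → ℝ) : ∑ k, ∑ c, ∑ d, w (k, c, d) = ∑ a, w a := by
  rw [Fintype.sum_prod_type]
  exact Finset.sum_congr rfl fun k _ => (Fintype.sum_prod_type (fun y : C × D => w (k, y))).symm

lemma pay_abs_le {u : K × C × D → ℝ} {σ : C → I → ℝ} {τ : D → J → ℝ} {g : K → I → J → ℝ}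
    (hu : IsDist u) (hσ : IsKernel σ) (hτ : IsKernel τ) (hg : Bounded1 g) :
    |pay u g σ τ| ≤ 1 := by
  rw [pay_eq]
  calc |∑ k, ∑ c, ∑ d, u (k, c, d) * (∑ i, ∑ j, σ c i * τ d j * g k i j)|
      ≤ ∑ k, ∑ c, ∑ d, |u (k, c, d) * (∑ i, ∑ j, σ c i * τ d j * g k i j)| := by
        refine (Finset.abs_sum_le_sum_abs _ _).trans ?_
        refine Finset.sum_le_sum fun k _ => (Finset.abs_sum_le_sum_abs _ _).trans ?_
        exact Finset.sum_le_sum fun c _ => Finset.abs_sum_le_sum_abs _ _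
    _ ≤ ∑ k, ∑ c, ∑ d, u (k, c, d) := by
        refine Finset.sum_le_sum fun k _ => Finset.sum_le_sum fun c _ =>
          Finset.sum_le_sum fun d _ => ?_
        rw [abs_mul, abs_of_nonneg (hu.1 _)]
        calc u (k, c, d) * |∑ i, ∑ j, σ c i * τ d j * g k i j| ≤ u (k, c, d) * 1 :=
              mul_le_mul_of_nonneg_left (inner2_abs_le hσ hτ hg k c d) (hu.1 _)
          _ = u (k, c, d) := mul_one _
    _ = 1 := by rw [sum_triple]; exact hu.2

lemma pay_sub_le {a b : K × C × D → ℝ} {σ : C → I → ℝ} {τ : D → J → ℝ} {g : K → I → J → ℝ}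
    (hσ : IsKernel σ) (hτ : IsKernel τ) (hg : Bounded1 g) :
    pay a g σ τ - pay b g σ τ ≤ l1 a b := by
  rw [pay_eq, pay_eq, ← Finset.sum_sub_distrib]
  simp_rw [← Finset.sum_sub_distrib, ← sub_mul]
  calc (∑ k, ∑ c, ∑ d, (a (k,c,d) - b (k,c,d)) * (∑ i, ∑ j, σ c i * τ d j * g k i j))
      ≤ ∑ k, ∑ c, ∑ d, |a (k,c,d) - b (k,c,d)| := by
        refine Finset.sum_le_sum fun k _ => Finset.sum_le_sum fun c _ =>
          Finset.sum_le_sum fun d _ => ?_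
        calc (a (k,c,d) - b (k,c,d)) * (∑ i, ∑ j, σ c i * τ d j * g k i j)
            ≤ |(a (k,c,d) - b (k,c,d)) * (∑ i, ∑ j, σ c i * τ d j * g k i j)| := le_abs_self _
          _ = |a (k,c,d) - b (k,c,d)| * |∑ i, ∑ j, σ c i * τ d j * g k i j| := abs_mul _ _
          _ ≤ |a (k,c,d) - b (k,c,d)| * 1 :=
              mul_le_mul_of_nonneg_left (inner2_abs_le hσ hτ hg k c d) (abs_nonneg _)
          _ = _ := mul_one _
    _ = l1 a b := sum_triple (fun x => |a x - b x|)

/-- The inner (player 2's minimization) set. -/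
def innerSet (u : K × C × D → ℝ) (g : K → I → J → ℝ) (σ : C → I → ℝ) : Set ℝ :=
  {y : ℝ | ∃ τ : D → J → ℝ, IsKernel τ ∧ y = pay u g σ τ}

/-- The outer (player 1's maximization) set. -/
def outerSet (u : K × C × D → ℝ) (g : K → I → J → ℝ) : Set ℝ :=
  {x : ℝ | ∃ σ : C → I → ℝ, IsKernel σ ∧ x = sInf (innerSet u g σ)}

lemma gameVal_eq (u : K × C × D → ℝ) (g : K → I → J → ℝ) :
    gameVal u g = sSup (outerSet u g) := rfl

variable {u : K × C × D → ℝ} {g : K → I → J → ℝ} {σ : C → I → ℝ}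

lemma innerSet_nonempty [Nonempty J] : (innerSet u g σ).Nonempty :=
  ⟨_, unifK D J, isKernel_unifK D J, rfl⟩

lemma innerSet_abs_le (hu : IsDist u) (hg : Bounded1 g) (hσ : IsKernel σ)
    {y : ℝ} (hy : y ∈ innerSet u g σ) : |y| ≤ 1 := by
  obtain ⟨τ, hτ, rfl⟩ := hy
  exact pay_abs_le hu hσ hτ hg

lemma innerSet_bddBelow (hu : IsDist u) (hg : Bounded1 g) (hσ : IsKernel σ) :
    BddBelow (innerSet u g σ) :=
  ⟨-1, fun y hy => neg_le_of_abs_le (innerSet_abs_le hu hg hσ hy)⟩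

lemma sInf_innerSet_le (hu : IsDist u) (hg : Bounded1 g) (hσ : IsKernel σ)
    {τ : D → J → ℝ} (hτ : IsKernel τ) :
    sInf (innerSet u g σ) ≤ pay u g σ τ :=
  csInf_le (innerSet_bddBelow hu hg hσ) ⟨τ, hτ, rfl⟩

lemma le_sInf_innerSet [Nonempty J] {L : ℝ}
    (h : ∀ τ : D → J → ℝ, IsKernel τ → L ≤ pay u g σ τ) :
    L ≤ sInf (innerSet u g σ) :=
  le_csInf innerSet_nonempty (by rintro y ⟨τ, hτ, rfl⟩; exact h τ hτ)

lemma sInf_innerSet_abs_le [Nonempty J] (hu : IsDist u) (hg : Bounded1 g) (hσ : IsKernel σ) :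
    |sInf (innerSet u g σ)| ≤ 1 := by
  rw [abs_le]
  constructor
  · exact le_sInf_innerSet fun τ hτ => neg_le_of_abs_le (pay_abs_le hu hσ hτ hg)
  · exact (sInf_innerSet_le hu hg hσ (isKernel_unifK D J)).trans
      (le_of_abs_le (pay_abs_le hu hσ (isKernel_unifK D J) hg))

lemma outerSet_nonempty [Nonempty I] : (outerSet u g).Nonempty :=
  ⟨_, unifK C I, isKernel_unifK C I, rfl⟩

lemma outerSet_bddAbove [Nonempty J] (hu : IsDist u) (hg : Bounded1 g) :
    BddAbove (outerSet u g) :=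
  ⟨1, by rintro x ⟨σ', hσ', rfl⟩; exact le_of_abs_le (sInf_innerSet_abs_le hu hg hσ')⟩

lemma le_gameVal [Nonempty J] (hu : IsDist u) (hg : Bounded1 g) (hσ : IsKernel σ) :
    sInf (innerSet u g σ) ≤ gameVal u g :=
  le_csSup (outerSet_bddAbove hu hg) ⟨σ, hσ, rfl⟩

lemma gameVal_le [Nonempty I] {U : ℝ}
    (h : ∀ σ' : C → I → ℝ, IsKernel σ' → sInf (innerSet u g σ') ≤ U) :
    gameVal u g ≤ U :=
  csSup_le outerSet_nonempty (by rintro x ⟨σ', hσ', rfl⟩; exact h σ' hσ')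

lemma gameVal_abs_le [Nonempty I] [Nonempty J] (hu : IsDist u) (hg : Bounded1 g) :
    |gameVal u g| ≤ 1 := by
  rw [abs_le]
  constructor
  · calc (-1 : ℝ) ≤ sInf (innerSet u g (unifK C I)) :=
        neg_le_of_abs_le (sInf_innerSet_abs_le hu hg (isKernel_unifK C I))
      _ ≤ gameVal u g := le_gameVal hu hg (isKernel_unifK C I)
  · exact gameVal_le fun σ' hσ' => le_of_abs_le (sInf_innerSet_abs_le hu hg hσ')

/-- Comparison lemma: pointwise payoff domination up to `t` gives value domination up to `t`. -/
lemma gameVal_le_gameVal_add [Nonempty I] [Nonempty J] {a b : K × C × D → ℝ}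
    (ha : IsDist a) (hb : IsDist b) (hg : Bounded1 g) {t : ℝ}
    (h : ∀ (σ' : C → I → ℝ) (τ : D → J → ℝ), IsKernel σ' → IsKernel τ →
      pay a g σ' τ ≤ pay b g σ' τ + t) :
    gameVal a g ≤ gameVal b g + t := by
  refine gameVal_le fun σ' hσ' => ?_
  have h1 : sInf (innerSet a g σ') - t ≤ sInf (innerSet b g σ') := by
    refine le_csInf innerSet_nonempty ?_
    rintro y ⟨τ, hτ, rfl⟩
    have := h σ' τ hσ' hτ
    have h2 := sInf_innerSet_le ha hg hσ' hτ
    linarith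
  have h3 := le_gameVal hb hg hσ'
  linarith

lemma swap13 {A B E : Type*} [Fintype A] [Fintype B] [Fintype E] (F : A → B → E → ℝ) :
    ∑ a, ∑ b, ∑ e, F a b e = ∑ e, ∑ b, ∑ a, F a b e := by
  have h1 : ∀ a, ∑ b, ∑ e, F a b e = ∑ e, ∑ b, F a b e := fun a => Finset.sum_comm
  rw [Finset.sum_congr rfl fun a _ => h1 a, Finset.sum_comm]
  exact Finset.sum_congr rfl fun e _ => Finset.sum_comm

lemma swap14 {A B E G : Type*} [Fintype A] [Fintype B] [Fintype E] [Fintype G]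
    (F : A → B → E → G → ℝ) :
    ∑ a, ∑ b, ∑ e, ∑ x, F a b e x = ∑ x, ∑ b, ∑ e, ∑ a, F a b e x := by
  have h1 : ∀ a, ∑ b, ∑ e, ∑ x, F a b e x = ∑ p : B × E, ∑ x, F a p.1 p.2 x := fun a => by
    rw [Fintype.sum_prod_type]
  have h2 : ∀ x, ∑ p : B × E, ∑ a, F a p.1 p.2 x = ∑ b, ∑ e, ∑ a, F a b e x := fun x => by
    rw [Fintype.sum_prod_type]
  rw [Finset.sum_congr rfl fun a _ => h1 a, swap13, Finset.sum_congr rfl fun x _ => h2 x]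

lemma swap15 {A B E G H : Type*} [Fintype A] [Fintype B] [Fintype E] [Fintype G] [Fintype H]
    (F : A → B → E → G → H → ℝ) :
    ∑ a, ∑ b, ∑ e, ∑ x, ∑ y, F a b e x y = ∑ y, ∑ b, ∑ e, ∑ x, ∑ a, F a b e x y := by
  have h1 : ∀ a, ∑ b, ∑ e, ∑ x, ∑ y, F a b e x y
      = ∑ p : B × E × G, ∑ y, F a p.1 p.2.1 p.2.2 y := fun a =>
    sum_triple (fun p : B × E × G => ∑ y, F a p.1 p.2.1 p.2.2 y)
  have h2 : ∀ y, ∑ p : B × E × G, ∑ a, F a p.1 p.2.1 p.2.2 y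
      = ∑ b, ∑ e, ∑ x, ∑ a, F a b e x y := fun y =>
    (sum_triple (fun p : B × E × G => ∑ a, F a p.1 p.2.1 p.2.2 y)).symm
  rw [Finset.sum_congr rfl fun a _ => h1 a, swap13, Finset.sum_congr rfl fun y _ => h2 y]

lemma pay_garbleL {C' : Type*} [Fintype C'] (q : C → C' → ℝ) (u : K × C × D → ℝ)
    (g : K → I → J → ℝ) (σ : C' → I → ℝ) (τ : D → J → ℝ) :
    pay (garbleL q u) g σ τ = pay u g (fun c i => ∑ c', q c c' * σ c' i) τ := by
  unfold pay garbleL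
  refine Finset.sum_congr rfl fun k _ => ?_
  have lhs : ∀ c' : C', ∑ d, ∑ i, ∑ j, (∑ c, u (k, c, d) * q c c') * σ c' i * τ d j * g k i j
      = ∑ d, ∑ i, ∑ j, ∑ c, u (k, c, d) * q c c' * σ c' i * τ d j * g k i j := by
    intro c'
    refine Finset.sum_congr rfl fun d _ => Finset.sum_congr rfl fun i _ =>
      Finset.sum_congr rfl fun j _ => ?_
    simp only [Finset.sum_mul]
  have rhs : ∀ c : C, ∑ d, ∑ i, ∑ j, u (k, c, d) * (∑ c', q c c' * σ c' i) * τ d j * g k i j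
      = ∑ d, ∑ i, ∑ j, ∑ c', u (k, c, d) * q c c' * σ c' i * τ d j * g k i j := by
    intro c
    refine Finset.sum_congr rfl fun d _ => Finset.sum_congr rfl fun i _ =>
      Finset.sum_congr rfl fun j _ => ?_
    simp only [Finset.mul_sum, Finset.sum_mul]
    exact Finset.sum_congr rfl fun c' _ => by ring
  rw [Finset.sum_congr rfl fun c' _ => lhs c', Finset.sum_congr rfl fun c _ => rhs c]
  exact swap15 (fun c' d i j c => u (k, c, d) * q c c' * σ c' i * τ d j * g k i j)

lemma pay_garbleR {D' : Type*} [Fintype D'] (q : D → D' → ℝ) (v : K × C × D → ℝ)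
    (g : K → I → J → ℝ) (σ : C → I → ℝ) (τ : D' → J → ℝ) :
    pay (garbleR q v) g σ τ = pay v g σ (fun d j => ∑ d', q d d' * τ d' j) := by
  unfold pay garbleR
  refine Finset.sum_congr rfl fun k _ => Finset.sum_congr rfl fun c _ => ?_
  have lhs : ∀ d' : D', ∑ i, ∑ j, (∑ d, v (k, c, d) * q d d') * σ c i * τ d' j * g k i j
      = ∑ i, ∑ j, ∑ d, v (k, c, d) * q d d' * σ c i * τ d' j * g k i j := by
    intro d'
    refine Finset.sum_congr rfl fun i _ => Finset.sum_congr rfl fun j _ => ?_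
    simp only [Finset.sum_mul]
  have rhs : ∀ d : D, ∑ i, ∑ j, v (k, c, d) * σ c i * (∑ d', q d d' * τ d' j) * g k i j
      = ∑ i, ∑ j, ∑ d', v (k, c, d) * q d d' * σ c i * τ d' j * g k i j := by
    intro d
    refine Finset.sum_congr rfl fun i _ => Finset.sum_congr rfl fun j _ => ?_
    simp only [Finset.mul_sum, Finset.sum_mul]
    exact Finset.sum_congr rfl fun d' _ => by ring
  rw [Finset.sum_congr rfl fun d' _ => lhs d', Finset.sum_congr rfl fun d _ => rhs d]
  exact swap14 (fun d' i j d => v (k, c, d) * q d d' * σ c i * τ d' j * g k i j)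

lemma isKernel_comp {α β γ : Type*} [Fintype β] [Fintype γ] {q : α → β → ℝ} {σ : β → γ → ℝ}
    (hq : IsKernel q) (hσ : IsKernel σ) : IsKernel (fun a c => ∑ b, q a b * σ b c) := by
  intro a
  constructor
  · intro c; exact Finset.sum_nonneg fun b _ => mul_nonneg ((hq a).1 b) ((hσ b).1 c)
  · rw [Finset.sum_comm]
    calc ∑ b, ∑ c, q a b * σ b c = ∑ b, q a b * ∑ c, σ b c := by
          exact Finset.sum_congr rfl fun b _ => (Finset.mul_sum _ _ _).symm
      _ = ∑ b, q a b := by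
          refine Finset.sum_congr rfl fun b _ => by rw [(hσ b).2, mul_one]
      _ = 1 := (hq a).2

lemma isDist_garbleL {C' : Type*} [Fintype C'] {q : C → C' → ℝ} {u : K × C × D → ℝ}
    (hq : IsKernel q) (hu : IsDist u) : IsDist (garbleL q u) := by
  constructor
  · intro x
    exact Finset.sum_nonneg fun c _ => mul_nonneg (hu.1 _) ((hq c).1 _)
  · rw [← sum_triple (garbleL q u)]
    have h1 : ∀ k : K, ∑ c', ∑ d, garbleL q u (k, c', d)
        = ∑ c', ∑ d, ∑ c, u (k, c, d) * q c c' := fun k => rfl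
    rw [Finset.sum_congr rfl fun k _ => h1 k]
    have h2 : ∀ k : K, ∑ c', ∑ d, ∑ c, u (k, c, d) * q c c'
        = ∑ c, ∑ d, ∑ c', u (k, c, d) * q c c' := fun k =>
      swap13 (fun c' d c => u (k, c, d) * q c c')
    rw [Finset.sum_congr rfl fun k _ => h2 k]
    have h3 : ∀ (k : K) (c : C) (d : D), ∑ c', u (k, c, d) * q c c' = u (k, c, d) := by
      intro k c d
      rw [← Finset.mul_sum, (hq c).2, mul_one]
    calc ∑ k, ∑ c, ∑ d, ∑ c', u (k, c, d) * q c c' = ∑ k, ∑ c, ∑ d, u (k, c, d) := by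
          exact Finset.sum_congr rfl fun k _ => Finset.sum_congr rfl fun c _ =>
            Finset.sum_congr rfl fun d _ => h3 k c d
      _ = 1 := by rw [sum_triple]; exact hu.2

lemma isDist_garbleR {D' : Type*} [Fintype D'] {q : D → D' → ℝ} {v : K × C × D → ℝ}
    (hq : IsKernel q) (hv : IsDist v) : IsDist (garbleR q v) := by
  constructor
  · intro x
    exact Finset.sum_nonneg fun d _ => mul_nonneg (hv.1 _) ((hq d).1 _)
  · rw [← sum_triple (garbleR q v)]
    have h1 : ∀ (k : K) (c : C), ∑ d', garbleR q v (k, c, d')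
        = ∑ d, ∑ d', v (k, c, d) * q d d' := fun k c => Finset.sum_comm
    rw [Finset.sum_congr rfl fun k _ => Finset.sum_congr rfl fun c _ => h1 k c]
    have h3 : ∀ (k : K) (c : C) (d : D), ∑ d', v (k, c, d) * q d d' = v (k, c, d) := by
      intro k c d
      rw [← Finset.mul_sum, (hq d).2, mul_one]
    calc ∑ k, ∑ c, ∑ d, ∑ d', v (k, c, d) * q d d' = ∑ k, ∑ c, ∑ d, v (k, c, d) := by
          exact Finset.sum_congr rfl fun k _ => Finset.sum_congr rfl fun c _ =>
            Finset.sum_congr rfl fun d _ => h3 k c d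
      _ = 1 := by rw [sum_triple]; exact hv.2

lemma pref_garbleL {u : K × C × D → ℝ} (hu : IsDist u) {q : C → C → ℝ} (hq : IsKernel q) :
    Pref u (garbleL q u) := by
  intro m n g hg
  refine gameVal_le fun σ' hσ' => ?_
  have hset : innerSet (garbleL q u) g σ' = innerSet u g (fun c i => ∑ c', q c c' * σ' c' i) := by
    ext y
    constructor
    · rintro ⟨τ, hτ, rfl⟩; exact ⟨τ, hτ, (pay_garbleL q u g σ' τ)⟩
    · rintro ⟨τ, hτ, rfl⟩; exact ⟨τ, hτ, (pay_garbleL q u g σ' τ).symm⟩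
  rw [hset]
  exact le_gameVal hu hg (isKernel_comp hq hσ')

lemma pref_garbleR {v : K × C × D → ℝ} (hv : IsDist v) {q : D → D → ℝ} (hq : IsKernel q) :
    Pref (garbleR q v) v := by
  intro m n g hg
  refine gameVal_le fun σ' hσ' => ?_
  have h1 : sInf (innerSet v g σ') ≤ sInf (innerSet (garbleR q v) g σ') := by
    refine le_csInf innerSet_nonempty ?_
    rintro y ⟨τ, hτ, rfl⟩
    rw [pay_garbleR]
    exact sInf_innerSet_le hv hg hσ' (isKernel_comp hq hτ)
  exact h1.trans (le_gameVal (isDist_garbleR hq hv) hg hσ')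

lemma isKernel_det {α β : Type*} [Fintype β] [DecidableEq β] (f : α → β) :
    IsKernel (fun a b => if b = f a then (1 : ℝ) else 0) := by
  intro a
  constructor
  · intro b; dsimp only; split <;> norm_num
  · simp

/-- Against the truthful strategy of player 2, player 1 cannot get more than the
best "reporting" deviation value. -/
lemma claimB {u : K × C × D → ℝ} (hu : IsDist u) {m n : ℕ}
    (eC : Fin (m + 1) ≃ C) (eD : Fin (n + 1) ≃ D)
    (h : K → C → D → ℝ) (hh : ∀ k c d, |h k c d| ≤ 1) (ψ : C → C)
    (hψ : ∀ c c'', (∑ k, ∑ d, u (k, c, d) * h k c'' d) ≤ ∑ k, ∑ d, u (k, c, d) * h k (ψ c) d) :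
    gameVal u (fun k i j => h k (eC i) (eD j)) ≤ ∑ c, ∑ k, ∑ d, u (k, c, d) * h k (ψ c) d := by
  have hH : Bounded1 (fun k i j => h k (eC i) (eD j)) := fun k i j => hh _ _ _
  refine gameVal_le fun σ hσ => ?_
  refine (sInf_innerSet_le hu hH hσ (isKernel_det (fun d => eD.symm d))).trans ?_
  have step1 : pay u (fun k i j => h k (eC i) (eD j)) σ (fun d j => if j = eD.symm d then 1 else 0)
      = ∑ k, ∑ c, ∑ d, ∑ i, u (k, c, d) * σ c i * h k (eC i) d := by
    unfold pay
    refine Finset.sum_congr rfl fun k _ => Finset.sum_congr rfl fun c _ =>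
      Finset.sum_congr rfl fun d _ => Finset.sum_congr rfl fun i _ => ?_
    simp [mul_ite, ite_mul, Finset.sum_ite_eq']
  rw [step1]
  have step2 : ∑ k, ∑ c, ∑ d, ∑ i, u (k, c, d) * σ c i * h k (eC i) d
      = ∑ c, ∑ i, σ c i * (∑ k, ∑ d, u (k, c, d) * h k (eC i) d) := by
    rw [Finset.sum_comm]
    refine Finset.sum_congr rfl fun c _ => ?_
    rw [swap13 (fun k d i => u (k, c, d) * σ c i * h k (eC i) d)]
    refine Finset.sum_congr rfl fun i _ => ?_
    rw [Finset.sum_comm]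
    rw [Finset.mul_sum]
    refine Finset.sum_congr rfl fun k _ => ?_
    rw [Finset.mul_sum]
    exact Finset.sum_congr rfl fun d _ => by ring
  rw [step2]
  calc ∑ c, ∑ i, σ c i * (∑ k, ∑ d, u (k, c, d) * h k (eC i) d)
      ≤ ∑ c, ∑ i, σ c i * (∑ k, ∑ d, u (k, c, d) * h k (ψ c) d) := by
        refine Finset.sum_le_sum fun c _ => Finset.sum_le_sum fun i _ =>
          mul_le_mul_of_nonneg_left (hψ c (eC i)) ((hσ c).1 i)
    _ = ∑ c, ∑ k, ∑ d, u (k, c, d) * h k (ψ c) d := by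
        refine Finset.sum_congr rfl fun c _ => ?_
        rw [← Finset.sum_mul, (hσ c).2, one_mul]

/-- Against the truthful strategy of player 1, player 2 cannot push the payoff below
the best "reporting" deviation value. -/
lemma claimC {v : K × C × D → ℝ} (hv : IsDist v) {m n : ℕ}
    (eC : Fin (m + 1) ≃ C) (eD : Fin (n + 1) ≃ D)
    (h : K → C → D → ℝ) (hh : ∀ k c d, |h k c d| ≤ 1) (φ : D → D)
    (hφ : ∀ d d'', (∑ k, ∑ c, v (k, c, d) * h k c (φ d)) ≤ ∑ k, ∑ c, v (k, c, d) * h k c d'') :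
    ∑ d, ∑ k, ∑ c, v (k, c, d) * h k c (φ d) ≤ gameVal v (fun k i j => h k (eC i) (eD j)) := by
  have hH : Bounded1 (fun k i j => h k (eC i) (eD j)) := fun k i j => hh _ _ _
  have hσT : IsKernel (fun c (i : Fin (m+1)) => if i = eC.symm c then (1:ℝ) else 0) :=
    isKernel_det (fun c => eC.symm c)
  refine le_trans ?_ (le_gameVal hv hH hσT)
  refine le_sInf_innerSet fun τ hτ => ?_
  have step1 : pay v (fun k i j => h k (eC i) (eD j)) (fun c i => if i = eC.symm c then 1 else 0) τ
      = ∑ k, ∑ c, ∑ d, ∑ j, v (k, c, d) * τ d j * h k c (eD j) := by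
    unfold pay
    refine Finset.sum_congr rfl fun k _ => Finset.sum_congr rfl fun c _ =>
      Finset.sum_congr rfl fun d _ => ?_
    rw [Finset.sum_comm]
    refine Finset.sum_congr rfl fun j _ => ?_
    simp [mul_ite, ite_mul, Finset.sum_ite_eq']
  rw [step1]
  have step2 : ∑ k, ∑ c, ∑ d, ∑ j, v (k, c, d) * τ d j * h k c (eD j)
      = ∑ d, ∑ j, τ d j * (∑ k, ∑ c, v (k, c, d) * h k c (eD j)) := by
    have hA : ∑ k, ∑ c, ∑ d, ∑ j, v (k, c, d) * τ d j * h k c (eD j)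
        = ∑ p : K × C, ∑ d, ∑ j, v (p.1, p.2, d) * τ d j * h p.1 p.2 (eD j) :=
      (Fintype.sum_prod_type (fun p : K × C => ∑ d, ∑ j, v (p.1, p.2, d) * τ d j * h p.1 p.2 (eD j))).symm
    rw [hA, Finset.sum_comm]
    refine Finset.sum_congr rfl fun d _ => ?_
    rw [Finset.sum_comm]
    refine Finset.sum_congr rfl fun j _ => ?_
    rw [Fintype.sum_prod_type, Finset.mul_sum]
    refine Finset.sum_congr rfl fun k _ => ?_
    rw [Finset.mul_sum]
    exact Finset.sum_congr rfl fun c _ => by ring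
  rw [step2]
  calc ∑ d, ∑ k, ∑ c, v (k, c, d) * h k c (φ d)
      = ∑ d, ∑ j, τ d j * (∑ k, ∑ c, v (k, c, d) * h k c (φ d)) := by
        refine Finset.sum_congr rfl fun d _ => ?_
        rw [← Finset.sum_mul, (hτ d).2, one_mul]
    _ ≤ ∑ d, ∑ j, τ d j * (∑ k, ∑ c, v (k, c, d) * h k c (eD j)) := by
        refine Finset.sum_le_sum fun d _ => Finset.sum_le_sum fun j _ =>
          mul_le_mul_of_nonneg_left (hφ d (eD j)) ((hτ d).1 j)

lemma ip_garbleL (u : K × C × D → ℝ) (g : K × C × D → ℝ) (ψ : C → C) :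
    ∑ p, g p * garbleL (fun c c' => if c' = ψ c then (1:ℝ) else 0) u p
      = ∑ c, ∑ k, ∑ d, g (k, ψ c, d) * u (k, c, d) := by
  rw [← sum_triple (fun p => g p * garbleL (fun c c' => if c' = ψ c then (1:ℝ) else 0) u p)]
  have step1 : ∀ (k : K) (c' : C) (d : D),
      g (k, c', d) * garbleL (fun c c' => if c' = ψ c then (1:ℝ) else 0) u (k, c', d)
      = ∑ c, if c' = ψ c then g (k, c', d) * u (k, c, d) else 0 := by
    intro k c' d
    unfold garbleL
    rw [Finset.mul_sum]
    refine Finset.sum_congr rfl fun c _ => ?_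
    by_cases hc : c' = ψ c <;> simp [hc]
  have step2 : ∀ k : K, ∑ c', ∑ d, ∑ c, (if c' = ψ c then g (k, c', d) * u (k, c, d) else 0)
      = ∑ c, ∑ d, ∑ c', (if c' = ψ c then g (k, c', d) * u (k, c, d) else 0) :=
    fun k => swap13 _
  calc ∑ k, ∑ c', ∑ d, g (k, c', d) * garbleL (fun c c' => if c' = ψ c then (1:ℝ) else 0) u (k, c', d)
      = ∑ k, ∑ c', ∑ d, ∑ c, (if c' = ψ c then g (k, c', d) * u (k, c, d) else 0) := by
        exact Finset.sum_congr rfl fun k _ => Finset.sum_congr rfl fun c' _ =>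
          Finset.sum_congr rfl fun d _ => step1 k c' d
    _ = ∑ k, ∑ c, ∑ d, ∑ c', (if c' = ψ c then g (k, c', d) * u (k, c, d) else 0) :=
        Finset.sum_congr rfl fun k _ => step2 k
    _ = ∑ k, ∑ c, ∑ d, g (k, ψ c, d) * u (k, c, d) := by
        refine Finset.sum_congr rfl fun k _ => Finset.sum_congr rfl fun c _ =>
          Finset.sum_congr rfl fun d _ => ?_
        simp [Finset.sum_ite_eq']
    _ = ∑ c, ∑ k, ∑ d, g (k, ψ c, d) * u (k, c, d) := Finset.sum_comm

lemma ip_garbleR (v : K × C × D → ℝ) (g : K × C × D → ℝ) (φ : D → D) :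
    ∑ p, g p * garbleR (fun d d' => if d' = φ d then (1:ℝ) else 0) v p
      = ∑ d, ∑ k, ∑ c, g (k, c, φ d) * v (k, c, d) := by
  rw [← sum_triple (fun p => g p * garbleR (fun d d' => if d' = φ d then (1:ℝ) else 0) v p)]
  have step1 : ∀ (k : K) (c : C) (d' : D),
      g (k, c, d') * garbleR (fun d d' => if d' = φ d then (1:ℝ) else 0) v (k, c, d')
      = ∑ d, if d' = φ d then g (k, c, d') * v (k, c, d) else 0 := by
    intro k c d'
    unfold garbleR
    rw [Finset.mul_sum]
    refine Finset.sum_congr rfl fun d _ => ?_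
    by_cases hd : d' = φ d <;> simp [hd]
  calc ∑ k, ∑ c, ∑ d', g (k, c, d') * garbleR (fun d d' => if d' = φ d then (1:ℝ) else 0) v (k, c, d')
      = ∑ k, ∑ c, ∑ d', ∑ d, (if d' = φ d then g (k, c, d') * v (k, c, d) else 0) := by
        exact Finset.sum_congr rfl fun k _ => Finset.sum_congr rfl fun c _ =>
          Finset.sum_congr rfl fun d' _ => step1 k c d'
    _ = ∑ k, ∑ c, ∑ d, ∑ d', (if d' = φ d then g (k, c, d') * v (k, c, d) else 0) :=
        Finset.sum_congr rfl fun k _ => Finset.sum_congr rfl fun c _ => Finset.sum_comm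
    _ = ∑ k, ∑ c, ∑ d, g (k, c, φ d) * v (k, c, d) := by
        refine Finset.sum_congr rfl fun k _ => Finset.sum_congr rfl fun c _ =>
          Finset.sum_congr rfl fun d _ => ?_
        simp [Finset.sum_ite_eq']
    _ = ∑ d, ∑ k, ∑ c, g (k, c, φ d) * v (k, c, d) := by
        rw [swap13 (fun k c d => g (k, c, φ d) * v (k, c, d))]
        exact Finset.sum_congr rfl fun d _ => Finset.sum_comm

/-- The key construction: for any bounded vector `g`, there are garblings whose
`g`-weighted gap is dominated by a value difference of some bounded game. -/
lemma exists_good_game [Nonempty C] [Nonempty D] {u v : K × C × D → ℝ}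
    (hu : IsDist u) (hv : IsDist v) (g : K × C × D → ℝ) (hg : ∀ p, |g p| ≤ 1) :
    ∃ (q1 : C → C → ℝ) (q2 : D → D → ℝ) (m n : ℕ) (H : K → Fin (m+1) → Fin (n+1) → ℝ),
      IsKernel q1 ∧ IsKernel q2 ∧ Bounded1 H ∧
      (∑ p, g p * (garbleL q1 u p - garbleR q2 v p)) ≤ gameVal v H - gameVal u H := by
  set h : K → C → D → ℝ := fun k c d => -(g (k, c, d)) with hh_def
  have hh : ∀ k c d, |h k c d| ≤ 1 := fun k c d => by
    rw [hh_def]; simpa using hg (k, c, d)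
  have hψ' : ∀ c : C, ∃ c' : C, ∀ c'' : C,
      (∑ k, ∑ d, u (k, c, d) * h k c'' d) ≤ ∑ k, ∑ d, u (k, c, d) * h k c' d := by
    intro c
    obtain ⟨b, -, hb⟩ := Finset.exists_max_image Finset.univ
      (fun c' => ∑ k, ∑ d, u (k, c, d) * h k c' d)
      ⟨Classical.arbitrary C, Finset.mem_univ _⟩
    exact ⟨b, fun c'' => hb c'' (Finset.mem_univ _)⟩
  choose ψ hψ using hψ'
  have hφ' : ∀ d : D, ∃ d' : D, ∀ d'' : D,
      (∑ k, ∑ c, v (k, c, d) * h k c d') ≤ ∑ k, ∑ c, v (k, c, d) * h k c d'' := by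
    intro d
    obtain ⟨b, -, hb⟩ := Finset.exists_min_image Finset.univ
      (fun d' => ∑ k, ∑ c, v (k, c, d) * h k c d')
      ⟨Classical.arbitrary D, Finset.mem_univ _⟩
    exact ⟨b, fun d'' => hb d'' (Finset.mem_univ _)⟩
  choose φ hφ using hφ'
  obtain ⟨m, hm⟩ : ∃ m, Fintype.card C = m + 1 :=
    ⟨Fintype.card C - 1, (Nat.succ_pred_eq_of_pos Fintype.card_pos).symm⟩
  obtain ⟨n, hn⟩ : ∃ n, Fintype.card D = n + 1 :=
    ⟨Fintype.card D - 1, (Nat.succ_pred_eq_of_pos Fintype.card_pos).symm⟩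
  let eC : Fin (m + 1) ≃ C := (Fintype.equivFinOfCardEq hm).symm
  let eD : Fin (n + 1) ≃ D := (Fintype.equivFinOfCardEq hn).symm
  refine ⟨fun c c' => if c' = ψ c then 1 else 0, fun d d' => if d' = φ d then 1 else 0,
    m, n, fun k i j => h k (eC i) (eD j), isKernel_det ψ, isKernel_det φ,
    fun k i j => hh _ _ _, ?_⟩
  have hB := claimB hu eC eD h hh ψ hψ
  have hC := claimC hv eC eD h hh φ hφ
  have hip : ∑ p, g p * (garbleL (fun c c' => if c' = ψ c then (1:ℝ) else 0) u p
      - garbleR (fun d d' => if d' = φ d then (1:ℝ) else 0) v p)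
      = (∑ d, ∑ k, ∑ c, v (k, c, d) * h k c (φ d))
        - (∑ c, ∑ k, ∑ d, u (k, c, d) * h k (ψ c) d) := by
    rw [show ∀ F G : (K × C × D) → ℝ, ∑ p, g p * (F p - G p) = (∑ p, g p * F p) - ∑ p, g p * G p
      from fun F G => by rw [← Finset.sum_sub_distrib]; exact Finset.sum_congr rfl fun p _ => by ring]
    rw [ip_garbleL, ip_garbleR]
    rw [sub_eq_iff_eq_add]
    have e1 : ∀ (k : K) (c : C) (d : D), g (k, ψ c, d) * u (k, c, d)
        = -(u (k, c, d) * h k (ψ c) d) := fun k c d => by rw [hh_def]; ring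
    have e2 : ∀ (k : K) (c : C) (d : D), g (k, c, φ d) * v (k, c, d)
        = -(v (k, c, d) * h k c (φ d)) := fun k c d => by rw [hh_def]; ring
    simp only [e1, e2, Finset.sum_neg_distrib]
    ring
  rw [hip]
  linarith

lemma l1_nonneg {α : Type*} [Fintype α] (a b : α → ℝ) : 0 ≤ l1 a b :=
  Finset.sum_nonneg fun p _ => abs_nonneg _

lemma l1_comm {α : Type*} [Fintype α] (a b : α → ℝ) : l1 a b = l1 b a :=
  Finset.sum_congr rfl fun p _ => abs_sub_comm _ _

lemma pay_zero (u : K × C × D → ℝ) (σ : C → I → ℝ) (τ : D → J → ℝ) :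
    pay u (fun _ _ _ => (0:ℝ)) σ τ = 0 := by simp [pay]

lemma bounded1_zero : Bounded1 (fun (_ : K) (_ : I) (_ : J) => (0:ℝ)) := fun _ _ _ => by norm_num

lemma gameVal_zero [Nonempty I] [Nonempty J] {u : K × C × D → ℝ} (hu : IsDist u) :
    gameVal u (fun (_ : K) (_ : I) (_ : J) => (0:ℝ)) = 0 := by
  apply le_antisymm
  · refine gameVal_le fun σ hσ =>
      le_trans (sInf_innerSet_le hu bounded1_zero hσ (isKernel_unifK D J))
        (le_of_eq (pay_zero u σ _))
  · refine le_trans ?_ (le_gameVal hu bounded1_zero (isKernel_unifK C I))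
    exact le_sInf_innerSet fun τ hτ => le_of_eq (pay_zero u _ τ).symm

/-- The set of garbled differences is convex. -/
lemma convex_garbleSet (u v : K × C × D → ℝ) :
    Convex ℝ {w : (K × C × D) → ℝ | ∃ q1 q2, IsKernel q1 ∧ IsKernel q2 ∧
      w = fun p => garbleL q1 u p - garbleR q2 v p} := by
  rintro x ⟨q1, q2, hq1, hq2, rfl⟩ y ⟨q1', q2', hq1', hq2', rfl⟩ a b ha hb hab
  refine ⟨fun c c' => a * q1 c c' + b * q1' c c', fun d d' => a * q2 d d' + b * q2' d d',
    ?_, ?_, ?_⟩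
  · intro c
    refine ⟨fun c' => add_nonneg (mul_nonneg ha ((hq1 c).1 c')) (mul_nonneg hb ((hq1' c).1 c')), ?_⟩
    rw [Finset.sum_add_distrib, ← Finset.mul_sum, ← Finset.mul_sum, (hq1 c).2, (hq1' c).2]
    rw [mul_one, mul_one]; exact hab
  · intro d
    refine ⟨fun d' => add_nonneg (mul_nonneg ha ((hq2 d).1 d')) (mul_nonneg hb ((hq2' d).1 d')), ?_⟩
    rw [Finset.sum_add_distrib, ← Finset.mul_sum, ← Finset.mul_sum, (hq2 d).2, (hq2' d).2]
    rw [mul_one, mul_one]; exact hab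
  · funext p
    simp only [Pi.add_apply, Pi.smul_apply, smul_eq_mul]
    unfold garbleL garbleR
    have e1 : ∑ c, u (p.1, c, p.2.2) * (a * q1 c p.2.1 + b * q1' c p.2.1)
        = a * ∑ c, u (p.1, c, p.2.2) * q1 c p.2.1 + b * ∑ c, u (p.1, c, p.2.2) * q1' c p.2.1 := by
      rw [Finset.mul_sum, Finset.mul_sum, ← Finset.sum_add_distrib]
      exact Finset.sum_congr rfl fun c _ => by ring
    have e2 : ∑ d, v (p.1, p.2.1, d) * (a * q2 d p.2.2 + b * q2' d p.2.2)
        = a * ∑ d, v (p.1, p.2.1, d) * q2 d p.2.2 + b * ∑ d, v (p.1, p.2.1, d) * q2' d p.2.2 := by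
      rw [Finset.mul_sum, Finset.mul_sum, ← Finset.sum_add_distrib]
      exact Finset.sum_congr rfl fun d _ => by ring
    rw [e1, e2]
    ring

/-- ℓ¹-duality via separation: if a convex set is at ℓ¹-distance at least `δ > 0` from `0`,
there is a vector in the unit ∞-ball whose inner product with the set is at least `δ`. -/
lemma dual_l1 {α : Type*} [Fintype α] [Nonempty α] (W : Set (α → ℝ)) (hWne : W.Nonempty)
    (hWconv : Convex ℝ W) {δ : ℝ} (hδpos : 0 < δ) (hδ : ∀ w ∈ W, δ ≤ ∑ p, |w p|) :
    ∃ g : α → ℝ, (∀ p, |g p| ≤ 1) ∧ ∀ w ∈ W, δ ≤ ∑ p, g p * w p := by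
  classical
  set B : Set (α → ℝ) := {x | ∑ p, |x p| < δ} with hB
  have hBconv : Convex ℝ B := by
    intro x hx y hy a b ha hb hab
    simp only [hB, Set.mem_setOf_eq] at hx hy ⊢
    have hpt : ∀ p, |(a • x + b • y) p| ≤ a * |x p| + b * |y p| := fun p => by
      simp only [Pi.add_apply, Pi.smul_apply, smul_eq_mul]
      calc |a * x p + b * y p| ≤ |a * x p| + |b * y p| := abs_add_le _ _
        _ = a * |x p| + b * |y p| := by
            rw [abs_mul, abs_mul, abs_of_nonneg ha, abs_of_nonneg hb]
    have hsum : ∑ p, |(a • x + b • y) p| ≤ a * (∑ p, |x p|) + b * (∑ p, |y p|) := by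
      calc ∑ p, |(a • x + b • y) p| ≤ ∑ p, (a * |x p| + b * |y p|) :=
            Finset.sum_le_sum fun p _ => hpt p
        _ = a * (∑ p, |x p|) + b * (∑ p, |y p|) := by
            rw [Finset.sum_add_distrib, ← Finset.mul_sum, ← Finset.mul_sum]
    rcases eq_or_lt_of_le ha with h0 | hapos
    · have hb1 : b = 1 := by linarith
      subst hb1
      have ha0 : a = 0 := h0.symm
      subst ha0
      show ∑ p, |((0:ℝ) • x + (1:ℝ) • y) p| < δ
      simpa using hy
    · have h1 : a * (∑ p, |x p|) < a * δ := mul_lt_mul_of_pos_left hx hapos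
      have h2 : b * (∑ p, |y p|) ≤ b * δ := mul_le_mul_of_nonneg_left hy.le hb
      have : a * δ + b * δ = δ := by rw [← add_mul, hab, one_mul]
      linarith
  have hBopen : IsOpen B := by
    have hcont : Continuous fun x : α → ℝ => ∑ p, |x p| :=
      continuous_finset_sum _ fun p _ => (continuous_apply p).abs
    exact isOpen_lt hcont continuous_const
  have hdisj : Disjoint B W := by
    rw [Set.disjoint_left]
    intro x hxB hxW
    exact absurd (hδ x hxW) (not_le.mpr hxB)
  obtain ⟨f, r, hfB, hfW⟩ := geometric_hahn_banach_open hBconv hBopen hWconv hdisj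
  have h0B : (0 : α → ℝ) ∈ B := by simp [hB, hδpos]
  have hr0 : 0 < r := by simpa using hfB 0 h0B
  set γ : α → ℝ := fun p => f (Pi.single p 1) with hγ
  have hsingle : ∀ (p : α) (s : ℝ), (Pi.single p s : α → ℝ) = s • (Pi.single p (1:ℝ) : α → ℝ) := by
    intro p s
    funext q
    by_cases hq : q = p <;> simp [Pi.single_apply, hq]
  have frepr : ∀ x : α → ℝ, f x = ∑ p, x p * γ p := by
    intro x
    have hx : x = ∑ p, (x p) • (Pi.single p (1:ℝ) : α → ℝ) := by
      conv_lhs => rw [← Finset.univ_sum_single x]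
      exact Finset.sum_congr rfl fun p _ => hsingle p (x p)
    calc f x = f (∑ p, (x p) • (Pi.single p (1:ℝ) : α → ℝ)) := by rw [← hx]
      _ = ∑ p, f ((x p) • (Pi.single p (1:ℝ) : α → ℝ)) := map_sum f _ _
      _ = ∑ p, x p * γ p := Finset.sum_congr rfl fun p _ => by
          rw [f.map_smul, smul_eq_mul]
  have key : ∀ x : α → ℝ, (∑ p, |x p|) ≤ 1 → δ * f x ≤ r := by
    intro x hx1
    by_contra hcon
    push_neg at hcon
    have hfx : 0 < f x := by nlinarith
    set t := r / f x with ht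
    have ht0 : 0 < t := div_pos hr0 hfx
    have htδ : t < δ := by rw [ht, div_lt_iff₀ hfx]; linarith
    have hmem : t • x ∈ B := by
      simp only [hB, Set.mem_setOf_eq, Pi.smul_apply, smul_eq_mul]
      have : ∑ p, |t * x p| = t * ∑ p, |x p| := by
        rw [Finset.mul_sum]
        exact Finset.sum_congr rfl fun p _ => by
          rw [abs_mul, abs_of_nonneg ht0.le]
      rw [this]
      calc t * ∑ p, |x p| ≤ t * 1 := mul_le_mul_of_nonneg_left hx1 ht0.le
        _ = t := mul_one _
        _ < δ := htδ
    have hlt := hfB _ hmem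
    rw [f.map_smul, smul_eq_mul, ht, div_mul_cancel₀ _ (ne_of_gt hfx)] at hlt
    exact lt_irrefl r hlt
  have hγr : ∀ p, δ * |γ p| ≤ r := by
    intro p
    set s : ℝ := if 0 ≤ γ p then 1 else -1 with hs
    have hxabs : ∑ q, |(Pi.single p s : α → ℝ) q| ≤ 1 := by
      have : ∀ q, |(Pi.single p s : α → ℝ) q| = if q = p then |s| else 0 := fun q => by
        by_cases hq : q = p <;> simp [Pi.single_apply, hq]
      rw [Finset.sum_congr rfl fun q _ => this q, Finset.sum_ite_eq' Finset.univ p fun _ => |s|]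
      have : |s| = 1 := by rw [hs]; split <;> norm_num
      simp [this]
    have hk := key (Pi.single p s : α → ℝ) hxabs
    have hfs : f (Pi.single p s : α → ℝ) = s * γ p := by
      rw [frepr]
      have : ∀ q, (Pi.single p s : α → ℝ) q * γ q = if q = p then s * γ p else 0 := fun q => by
        by_cases hq : q = p <;> simp [Pi.single_apply, hq]
      rw [Finset.sum_congr rfl fun q _ => this q, Finset.sum_ite_eq' Finset.univ p
        fun _ => s * γ p]
      simp
    have habs : s * γ p = |γ p| := by
      rw [hs]
      rcases le_or_gt 0 (γ p) with h | h
      · rw [if_pos h, one_mul, abs_of_nonneg h]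
      · rw [if_neg (not_le.mpr h), abs_of_neg h]; ring
    rw [hfs, habs] at hk
    exact hk
  obtain ⟨p0, -, hp0⟩ := Finset.exists_max_image Finset.univ (fun p => |γ p|)
    ⟨Classical.arbitrary α, Finset.mem_univ _⟩
  set M := |γ p0| with hM
  have hMnn : 0 ≤ M := abs_nonneg _
  have hM0 : 0 < M := by
    rcases hMnn.lt_or_eq with h | h
    · exact h
    · exfalso
      have hz : ∀ p, γ p = 0 := fun p => by
        have := hp0 p (Finset.mem_univ p)
        rw [← h] at this
        exact abs_eq_zero.mp (le_antisymm this (abs_nonneg _))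
      obtain ⟨w0, hw0⟩ := hWne
      have : f w0 = 0 := by
        rw [frepr]
        exact Finset.sum_eq_zero fun p _ => by rw [hz p, mul_zero]
      have := hfW w0 hw0
      rw [‹f w0 = 0›] at this
      linarith
  refine ⟨fun p => γ p / M, fun p => ?_, fun w hw => ?_⟩
  · rw [abs_div, abs_of_pos hM0]
    exact div_le_one_of_le₀ (hp0 p (Finset.mem_univ p)) hM0.le
  · have h1 : δ * M ≤ r := hγr p0
    have h2 : r ≤ f w := hfW w hw
    have h3 : ∑ p, γ p / M * w p = f w / M := by
      rw [frepr, Finset.sum_div]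
      exact Finset.sum_congr rfl fun p _ => by ring
    rw [h3, le_div_iff₀ hM0]
    linarith

end Aux

theorem stmt19 {K C D : Type*} [Fintype K] [Fintype C] [Fintype D]
    (u v : K × C × D → ℝ) (hu : IsDist u) (hv : IsDist v) :
    sSup {x : ℝ | ∃ (m n : ℕ) (g : K → Fin (m + 1) → Fin (n + 1) → ℝ), Bounded1 g ∧
        x = gameVal v g - gameVal u g}
      = sInf {x : ℝ | ∃ u' v' : K × C × D → ℝ, IsDist u' ∧ IsDist v' ∧
          Pref u u' ∧ Pref v' v ∧ x = l1 u' v'} := by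
  classical
  -- the signal spaces are nonempty since `u` is a probability distribution
  have hne : Nonempty (K × C × D) := by
    by_contra hne
    rw [not_nonempty_iff] at hne
    have h0 : (∑ a : K × C × D, u a) = 0 := by
      rw [Finset.univ_eq_empty, Finset.sum_empty]
    rw [hu.2] at h0
    norm_num at h0
  obtain ⟨⟨k0, c0, d0⟩⟩ := hne
  have hK : Nonempty K := ⟨k0⟩
  have hC : Nonempty C := ⟨c0⟩
  have hD : Nonempty D := ⟨d0⟩
  have hKCD : Nonempty (K × C × D) := ⟨(k0, c0, d0)⟩
  set LHS : Set ℝ := {x : ℝ | ∃ (m n : ℕ) (g : K → Fin (m + 1) → Fin (n + 1) → ℝ), Bounded1 g ∧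
      x = gameVal v g - gameVal u g} with hLHS_def
  set RHS : Set ℝ := {x : ℝ | ∃ u' v' : K × C × D → ℝ, IsDist u' ∧ IsDist v' ∧
      Pref u u' ∧ Pref v' v ∧ x = l1 u' v'} with hRHS_def
  have hzero_mem : (0 : ℝ) ∈ LHS := by
    refine ⟨0, 0, fun _ _ _ => 0, bounded1_zero, ?_⟩
    rw [gameVal_zero hu, gameVal_zero hv, sub_zero]
  have hLHS_ne : LHS.Nonempty := ⟨0, hzero_mem⟩
  have hLHS_bdd : BddAbove LHS := by
    refine ⟨2, ?_⟩
    rintro x ⟨m, n, g, hg, rfl⟩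
    have h1 := gameVal_abs_le hu hg
    have h2 := gameVal_abs_le hv hg
    rw [abs_le] at h1 h2
    linarith [h1.1, h1.2, h2.1, h2.2]
  have hS_nonneg : 0 ≤ sSup LHS := le_csSup hLHS_bdd hzero_mem
  have hRHS_ne : RHS.Nonempty :=
    ⟨l1 u v, u, v, hu, hv, fun _ _ _ _ => le_rfl, fun _ _ _ _ => le_rfl, rfl⟩
  have hRHS_bdd : BddBelow RHS := by
    refine ⟨0, ?_⟩
    rintro x ⟨u', v', _, _, _, _, rfl⟩
    exact l1_nonneg u' v'
  apply le_antisymm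
  · -- easy direction: every game gap is below every garbled distance
    refine le_csInf hRHS_ne ?_
    rintro b ⟨u', v', hu', hv', hpu, hpv, rfl⟩
    refine csSup_le hLHS_ne ?_
    rintro x ⟨m, n, g, hg, rfl⟩
    have h1 := hpu m n g hg
    have h2 := hpv m n g hg
    have h3 : gameVal v' g ≤ gameVal u' g + l1 u' v' := by
      refine gameVal_le_gameVal_add hv' hu' hg fun σ τ hσ hτ => ?_
      have h4 := pay_sub_le (a := v') (b := u') hσ hτ hg
      rw [l1_comm] at h4
      linarith
    linarith
  · -- hard direction, via separation
    set W : Set ((K × C × D) → ℝ) := {w | ∃ q1 q2, IsKernel q1 ∧ IsKernel q2 ∧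
      w = fun p => garbleL q1 u p - garbleR q2 v p} with hW_def
    have hWne : W.Nonempty := by
      refine ⟨_, (fun c c' => if c' = c then (1:ℝ) else 0),
        (fun d d' => if d' = d then (1:ℝ) else 0),
        isKernel_det (fun c => c), isKernel_det (fun d => d), rfl⟩
    have hWconv : Convex ℝ W := convex_garbleSet u v
    set Δ : Set ℝ := {x : ℝ | ∃ w ∈ W, x = ∑ p, |w p|} with hΔ_def
    have hΔne : Δ.Nonempty := by
      obtain ⟨w0, hw0⟩ := hWne
      exact ⟨_, w0, hw0, rfl⟩
    have hΔbdd : BddBelow Δ := by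
      refine ⟨0, ?_⟩
      rintro x ⟨w, hw, rfl⟩
      exact Finset.sum_nonneg fun p _ => abs_nonneg _
    have hsub : Δ ⊆ RHS := by
      rintro x ⟨w, ⟨q1, q2, hq1, hq2, rfl⟩, rfl⟩
      exact ⟨garbleL q1 u, garbleR q2 v, isDist_garbleL hq1 hu, isDist_garbleR hq2 hv,
        pref_garbleL hu hq1, pref_garbleR hv hq2, rfl⟩
    have hTδ : sInf RHS ≤ sInf Δ := csInf_le_csInf hRHS_bdd hΔne hsub
    set δ := sInf Δ with hδ_def
    have hδS : δ ≤ sSup LHS := by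
      rcases le_or_gt δ 0 with hδ0 | hδ0
      · exact hδ0.trans hS_nonneg
      · obtain ⟨g, hg1, hg2⟩ := dual_l1 W hWne hWconv hδ0
          (fun w hw => csInf_le hΔbdd ⟨w, hw, rfl⟩)
        obtain ⟨q1, q2, m, n, H, hq1, hq2, hH, hle⟩ := exists_good_game hu hv g hg1
        have hwmem : (fun p => garbleL q1 u p - garbleR q2 v p) ∈ W := ⟨q1, q2, hq1, hq2, rfl⟩
        have hlow := hg2 _ hwmem
        have hmem : gameVal v H - gameVal u H ∈ LHS := ⟨m, n, H, hH, rfl⟩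
        have hup := le_csSup hLHS_bdd hmem
        linarith
    linarith
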